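/- Let m ≥ 2, let a₁,…,a_{m−1} be real numbers, and let p(s) = s^{m−1} + a_{m−1}s^{m−2} + ⋯ + a₂s + a₁. Suppose every complex root of p has negative real part. Let f : ℝ → ℝ be continuous with lim_{t→∞} f(t) = f*, and let r : ℝ → ℝ be (m−1)-times differentiable with r^{(m−1)}(t) + a_{m−1}r^{(m−2)}(t) + ⋯ + a₂ r′(t) + a₁ r(t) = f(t) for all t ≥ 0. Then lim_{t→∞} r(t) = f*/a₁ and lim_{t→∞} r^{(i)}(t) = 0 for every i = 1,…,m−2. -/

import Mathlib

open Filter Polynomial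

lemma first_order_decay (lam : ℂ) (hlam : lam.re < 0) (w e : ℝ → ℂ)
    (hw : Differentiable ℝ w)
    (hode : ∀ t, 0 ≤ t → deriv w t = lam * w t + e t)
    (he : Tendsto e atTop (nhds 0)) :
    Tendsto w atTop (nhds 0) := by
  set c : ℝ := -lam.re with hcdef
  have hc : 0 < c := by simp [hcdef]; linarith
  rw [NormedAddCommGroup.tendsto_nhds_zero]
  intro ε hε
  set δ : ℝ := c * ε / 4 with hδdef
  have hδ : 0 < δ := by positivity
  set M : ℝ := 4 * δ ^ 2 / c ^ 2 with hMdef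
  have hM : 0 < M := by positivity
  -- find T
  have hev : ∀ᶠ t in atTop, ‖e t‖ ≤ δ ∧ (0:ℝ) ≤ t := by
    filter_upwards [he.norm.eventually (ge_mem_nhds (by simpa using hδ)),
      eventually_ge_atTop (0:ℝ)] with t h1 h2
    exact ⟨by simpa using h1, h2⟩
  obtain ⟨T, hT⟩ := hev.exists_forall_of_atTop
  have hT0 : (0:ℝ) ≤ T := (hT T le_rfl).2
  -- the squared norm
  set g : ℝ → ℝ := fun t => (w t).re ^ 2 + (w t).im ^ 2 with hgdef
  have hwre : ∀ t, HasDerivAt (fun s => (w s).re) (deriv w t).re t := fun t =>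
    (Complex.reCLM.hasFDerivAt.comp_hasDerivAt t (hw t).hasDerivAt)
  have hwim : ∀ t, HasDerivAt (fun s => (w s).im) (deriv w t).im t := fun t =>
    (Complex.imCLM.hasFDerivAt.comp_hasDerivAt t (hw t).hasDerivAt)
  have hg : ∀ t, HasDerivAt g
      (2 * (w t).re * (deriv w t).re + 2 * (w t).im * (deriv w t).im) t := by
    intro t
    have h1 := ((hwre t).fun_pow 2).fun_add ((hwim t).fun_pow 2)
    exact h1.congr_deriv (by ring)
  have hgnn : ∀ t, 0 ≤ g t := fun t => by positivity
  -- key differential inequality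
  have key : ∀ t, T ≤ t →
      2 * (w t).re * (deriv w t).re + 2 * (w t).im * (deriv w t).im ≤ -c * g t + c * M := by
    intro t ht
    obtain ⟨hee, ht0⟩ := hT t ht
    have hrw := hode t ht0
    have her : |(e t).re| ≤ δ := (Complex.abs_re_le_norm _).trans hee
    have hei : |(e t).im| ≤ δ := (Complex.abs_im_le_norm _).trans hee
    obtain ⟨her1, her2⟩ := abs_le.mp her
    obtain ⟨hei1, hei2⟩ := abs_le.mp hei
    have hxre : (deriv w t).re = lam.re * (w t).re - lam.im * (w t).im + (e t).re := by
      rw [hrw]; simp [Complex.add_re, Complex.mul_re]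
    have hxim : (deriv w t).im = lam.im * (w t).re + lam.re * (w t).im + (e t).im := by
      rw [hrw]; simp [Complex.add_im, Complex.mul_im]; ring
    have hp : lam.re = -c := by rw [hcdef]; ring
    rw [hxre, hxim]
    have hcM : c * M = 4 * δ ^ 2 / c := by
      rw [hMdef]; field_simp
    rw [hcM, hp]
    simp only [hgdef]
    set x := (w t).re
    set y := (w t).im
    set er := (e t).re
    set ei := (e t).im
    have H : (2 * x * (-c * x - lam.im * y + er) + 2 * y * (lam.im * x + -c * y + ei)
        + c * (x ^ 2 + y ^ 2)) * c ≤ 4 * δ ^ 2 := by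
      nlinarith [sq_nonneg (c * x - 2 * er), sq_nonneg (c * y - 2 * ei), sq_nonneg x,
        sq_nonneg y, mul_pos hc hc, hc.le,
        mul_nonneg (by linarith : (0:ℝ) ≤ δ - er) (by linarith : (0:ℝ) ≤ δ + er),
        mul_nonneg (by linarith : (0:ℝ) ≤ δ - ei) (by linarith : (0:ℝ) ≤ δ + ei)]
    have H2 := (le_div_iff₀ hc).mpr H
    linarith
  -- Lyapunov-type function
  set h : ℝ → ℝ := fun t => Real.exp (c * t) * (g t - M) with hhdef
  have hh : ∀ t, HasDerivAt h (Real.exp (c * t) * (c * (g t - M)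
      + (2 * (w t).re * (deriv w t).re + 2 * (w t).im * (deriv w t).im))) t := by
    intro t
    have h1 : HasDerivAt (fun s => Real.exp (c * s)) (Real.exp (c * t) * (c * 1)) t :=
      (Real.hasDerivAt_exp (c * t)).comp t ((hasDerivAt_id t).const_mul c)
    have h2 := h1.fun_mul ((hg t).sub_const M)
    exact h2.congr_deriv (by ring)
  have hanti : AntitoneOn h (Set.Ici T) := by
    apply antitoneOn_of_deriv_nonpos (convex_Ici T)
    · exact fun t _ => ((hh t).continuousAt).continuousWithinAt
    · exact fun t ht => ((hh t).differentiableAt).differentiableWithinAt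
    · intro t ht
      rw [interior_Ici] at ht
      rw [(hh t).deriv]
      have hk := key t ht.le
      have h2 : c * (g t - M)
          + (2 * (w t).re * (deriv w t).re + 2 * (w t).im * (deriv w t).im) ≤ 0 := by linarith
      exact mul_nonpos_of_nonneg_of_nonpos (Real.exp_pos _).le h2
  -- decay of the exponential tail
  have hexp0 : Tendsto (fun t => Real.exp (c * (T - t)) * |g T - M|) atTop (nhds 0) := by
    have h1 : Tendsto (fun t : ℝ => T - t) atTop atBot := by
      simpa [sub_eq_add_neg] using
        tendsto_atBot_add_const_left atTop T tendsto_neg_atTop_atBot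
    have h2 : Tendsto (fun t : ℝ => c * (T - t)) atTop atBot := h1.const_mul_atBot hc
    have h3 := Real.tendsto_exp_atBot.comp h2
    simpa using h3.mul_const |g T - M|
  have hevM : ∀ᶠ t in atTop, Real.exp (c * (T - t)) * |g T - M| < M :=
    hexp0.eventually (gt_mem_nhds hM)
  filter_upwards [hevM, eventually_ge_atTop T] with t htM ht
  have hht := hanti (Set.self_mem_Ici) (Set.mem_Ici.mpr ht) ht
  simp only [hhdef] at hht
  have hept : (0:ℝ) < Real.exp (c * t) := Real.exp_pos _
  have hgt : g t - M ≤ Real.exp (c * (T - t)) * (g T - M) := by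
    have harg : c * (T - t) = c * T - c * t := by ring
    rw [harg, Real.exp_sub, div_mul_eq_mul_div, le_div_iff₀ hept, mul_comm]
    exact hht
  have hgt2 : Real.exp (c * (T - t)) * (g T - M) ≤ Real.exp (c * (T - t)) * |g T - M| :=
    mul_le_mul_of_nonneg_left (le_abs_self _) (Real.exp_pos _).le
  have hgM : g t < 2 * M := by linarith
  have hnorm : ‖w t‖ ^ 2 = (w t).re ^ 2 + (w t).im ^ 2 := by
    rw [Complex.sq_norm, Complex.normSq_apply]; ring
  have hMval : M = ε ^ 2 / 4 := by
    rw [hMdef, hδdef]; field_simp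
  have hgval : g t = (w t).re ^ 2 + (w t).im ^ 2 := by rw [hgdef]
  nlinarith [norm_nonneg (w t)]

lemma first_order_limit (lam : ℂ) (hlam : lam.re < 0) (u v : ℝ → ℂ)
    (hu : Differentiable ℝ u)
    (hode : ∀ t, 0 ≤ t → deriv u t = lam * u t + v t) (L : ℂ)
    (hv : Tendsto v atTop (nhds L)) :
    Tendsto u atTop (nhds (-L / lam)) := by
  have hlam0 : lam ≠ 0 := by
    intro h
    rw [h] at hlam
    simp at hlam
  have hdecay : Tendsto (fun t => u t - (-L / lam)) atTop (nhds 0) := by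
    apply first_order_decay lam hlam _ (fun t => v t - L)
    · exact hu.sub_const _
    · intro t ht
      have h1 : deriv (fun s => u s - (-L / lam)) t = deriv u t := by
        simp [deriv_sub_const]
      rw [h1, hode t ht]
      field_simp
      ring
    · simpa using hv.sub_const L
  have := hdecay.add_const (-L / lam)
  simpa using this

lemma deriv_ofReal_comp (g : ℝ → ℝ) :
    deriv (fun t => (g t : ℂ)) = fun t => ((deriv g t : ℝ) : ℂ) := by
  funext x
  by_cases h : DifferentiableAt ℝ g x
  · exact (h.hasDerivAt.ofReal_comp).deriv
  · have h2 : ¬ DifferentiableAt ℝ (fun t => (g t : ℂ)) x := by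
      intro hc
      have := Complex.reCLM.differentiableAt.comp x hc
      have h3 : (⇑Complex.reCLM ∘ fun t => ((g t : ℝ) : ℂ)) = g := by
        funext t; simp
      rw [h3] at this
      exact h this
    rw [deriv_zero_of_not_differentiableAt h, deriv_zero_of_not_differentiableAt h2]
    simp

lemma iteratedDeriv_ofReal_comp (g : ℝ → ℝ) (n : ℕ) :
    iteratedDeriv n (fun t => (g t : ℂ)) = fun t => ((iteratedDeriv n g t : ℝ) : ℂ) := by
  induction n with
  | zero => simp [iteratedDeriv_zero]
  | succ k ih =>
      rw [iteratedDeriv_succ, iteratedDeriv_succ, ih, deriv_ofReal_comp]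

/-- **Lemma 1 (sufficiency part).** If all complex roots of
`s^(m-1) + a_{m-1} s^(m-2) + ⋯ + a₂ s + a₁` have negative real part, `f` is continuous with
`f(t) → f*`, and `r` is `(m-1)`-times differentiable and satisfies the ODE
`r^{(m-1)} + a_{m-1} r^{(m-2)} + ⋯ + a₁ r = f` on `[0,∞)`, then `r(t) → f*/a₁` and
`r^{(i)}(t) → 0` for `i = 1, …, m-2`. -/
theorem high_order_ode_convergence
    (m : ℕ) (hm : 2 ≤ m) (a : ℕ → ℝ)
    (hroots : ∀ z : ℂ,
      z ^ (m - 1) + ∑ i ∈ Finset.range (m - 1), (a (i + 1) : ℂ) * z ^ i = 0 → z.re < 0)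
    (f : ℝ → ℝ) (hfcont : Continuous f) (fstar : ℝ)
    (hflim : Tendsto f atTop (nhds fstar))
    (r : ℝ → ℝ) (hdiff : ∀ i < m - 1, Differentiable ℝ (iteratedDeriv i r))
    (hode : ∀ t : ℝ, 0 ≤ t →
      iteratedDeriv (m - 1) r t
        + ∑ i ∈ Finset.range (m - 1), a (i + 1) * iteratedDeriv i r t = f t) :
    Tendsto r atTop (nhds (fstar / a 1)) ∧
      ∀ i : ℕ, 1 ≤ i → i ≤ m - 2 → Tendsto (iteratedDeriv i r) atTop (nhds 0) := by
  set n := m - 1 with hn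
  have hn1 : 1 ≤ n := by omega
  set P : Polynomial ℂ := Polynomial.X ^ n
      + ∑ i ∈ Finset.range n, Polynomial.C ((a (i + 1) : ℂ)) * Polynomial.X ^ i with hPdef
  have hdegsum : (∑ i ∈ Finset.range n,
      Polynomial.C ((a (i + 1) : ℂ)) * Polynomial.X ^ i).degree < ((n : ℕ) : WithBot ℕ) := by
    apply lt_of_le_of_lt (Polynomial.degree_sum_le _ _)
    rw [Finset.sup_lt_iff (by exact_mod_cast WithBot.bot_lt_coe n)]
    intro i hi
    apply lt_of_le_of_lt (Polynomial.degree_C_mul_X_pow_le _ _)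
    exact_mod_cast Finset.mem_range.mp hi
  have hmonic : P.Monic := Polynomial.monic_X_pow_add hdegsum
  have hPdeg : P.natDegree = n := by
    have : P.degree = n := by
      rw [hPdef]
      rw [Polynomial.degree_add_eq_left_of_degree_lt (by rwa [Polynomial.degree_X_pow]),
        Polynomial.degree_X_pow]
    exact Polynomial.natDegree_eq_of_degree_eq_some this
  have hcoeff : ∀ j, j < n → P.coeff j = (a (j + 1) : ℂ) := by
    intro j hj
    rw [hPdef, Polynomial.coeff_add, Polynomial.coeff_X_pow, if_neg (by omega),
      Polynomial.finset_sum_coeff]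
    rw [zero_add]
    rw [Finset.sum_eq_single j]
    · simp
    · intro b _ hbj
      rw [Polynomial.coeff_C_mul, Polynomial.coeff_X_pow, if_neg (fun h => hbj h.symm), mul_zero]
    · intro h
      exact absurd (Finset.mem_range.mpr hj) h
  have heval : ∀ z : ℂ, P.eval z = z ^ n + ∑ i ∈ Finset.range n, (a (i + 1) : ℂ) * z ^ i := by
    intro z
    rw [hPdef]
    simp [Polynomial.eval_finset_sum]
  have hrootsneg : ∀ z ∈ P.roots, z.re < 0 := by
    intro z hz
    have := Polynomial.isRoot_of_mem_roots hz
    rw [Polynomial.IsRoot, heval] at this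
    exact hroots z this
  have hcard : Multiset.card P.roots = n := by
    rw [← hPdeg]
    exact (Polynomial.splits_iff_card_roots.mp (IsAlgClosed.splits P))
  have hfact : (P.roots.map (fun z => Polynomial.X - Polynomial.C z)).prod = P :=
    Polynomial.prod_multiset_X_sub_C_of_monic_of_roots_card_eq hmonic (by rw [hcard, hPdeg])
  -- list of roots
  set l : List ℂ := P.roots.toList with hldef
  have hlen : l.length = n := by rw [hldef, Multiset.length_toList, hcard]
  have hlprod : ((l.map (fun z => Polynomial.X - Polynomial.C z)).prod) = P := by
    rw [← hfact, ← Multiset.coe_toList P.roots]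
    rfl
  set lam : ℕ → ℂ := fun k => l.getD k 0 with hlamdef
  have hlam_mem : ∀ k, k < n → lam k ∈ P.roots := by
    intro k hk
    have hk' : k < l.length := by omega
    rw [hlamdef]
    simp only [List.getD_eq_getElem l 0 hk']
    rw [← Multiset.mem_toList]
    exact List.getElem_mem hk'
  have hlamre : ∀ k, k < n → (lam k).re < 0 := fun k hk => hrootsneg _ (hlam_mem k hk)
  have hlamne : ∀ k, k < n → lam k ≠ 0 := by
    intro k hk h0
    have := hlamre k hk
    rw [h0] at this
    simp at this
  -- partial products
  set q : ℕ → Polynomial ℂ := fun k =>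
    ((l.take k).map (fun z => Polynomial.X - Polynomial.C z)).prod with hqdef
  have hq0 : q 0 = 1 := by simp [hqdef]
  have hqn : q n = P := by
    rw [hqdef]
    simp only
    rw [← hlen, List.take_length]
    exact hlprod
  have hqsucc : ∀ k, k < n → q (k + 1) = q k * (Polynomial.X - Polynomial.C (lam k)) := by
    intro k hk
    have hk' : k < l.length := by omega
    have hk'' : k < (l.map (fun z => Polynomial.X - Polynomial.C z)).length := by
      rw [List.length_map]; omega
    rw [hqdef]
    simp only [List.map_take]
    rw [List.prod_take_succ _ _ hk'']
    congr 1
    rw [List.getElem_map]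
    congr 1
    rw [hlamdef]
    simp [List.getD_eq_getElem l 0 hk', List.getElem?_eq_getElem hk']
  have hqdeg : ∀ k, (q k).natDegree ≤ k := by
    intro k
    induction k with
    | zero => rw [hq0]; simp
    | succ j ih =>
        by_cases hj : j < n
        · rw [hqsucc j hj]
          apply le_trans (Polynomial.natDegree_mul_le)
          rw [Polynomial.natDegree_X_sub_C]
          omega
        · have heq : q (j + 1) = q j := by
            rw [hqdef]
            simp only
            rw [List.take_of_length_le (by omega : l.length ≤ j + 1),
              List.take_of_length_le (by omega : l.length ≤ j)]
          rw [heq]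
          exact le_trans ih (by omega)
  -- complexified solution
  set R : ℝ → ℂ := fun t => (r t : ℂ) with hRdef
  have hiter : ∀ j, iteratedDeriv j R = fun t => ((iteratedDeriv j r t : ℝ) : ℂ) :=
    iteratedDeriv_ofReal_comp r
  have hRdiff : ∀ j, j < n → Differentiable ℝ (iteratedDeriv j R) := by
    intro j hj
    rw [hiter]
    exact Complex.ofRealCLM.differentiable.comp (hdiff j (by omega))
  have hRderiv : ∀ j, deriv (iteratedDeriv j R) = iteratedDeriv (j + 1) R :=
    fun j => (iteratedDeriv_succ).symm
  -- the chain functions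
  set u : ℕ → ℝ → ℂ := fun k t =>
    ∑ j ∈ Finset.range (k + 1), (q k).coeff j * iteratedDeriv j R t with hudef
  have hu0 : u 0 = R := by
    funext t
    rw [hudef]
    simp [hq0, iteratedDeriv_zero]
  have hudiff : ∀ k, k < n → Differentiable ℝ (u k) := by
    intro k hk
    rw [hudef]
    apply Differentiable.fun_sum
    intro j hj
    exact ((hRdiff j (lt_of_lt_of_le (Finset.mem_range.mp hj) hk)).const_mul _)
  have huHasDeriv : ∀ k, k < n → ∀ t, HasDerivAt (u k)
      (∑ j ∈ Finset.range (k + 1), (q k).coeff j * iteratedDeriv (j + 1) R t) t := by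
    intro k hk t
    rw [hudef]
    apply HasDerivAt.fun_sum
    intro j hj
    have hjn : j < n := lt_of_lt_of_le (Finset.mem_range.mp hj) hk
    have h1 := ((hRdiff j hjn) t).hasDerivAt
    have h2 : deriv (iteratedDeriv j R) t = iteratedDeriv (j + 1) R t := by
      rw [hRderiv j]
    rw [← h2]
    exact h1.const_mul _
  have huderiv : ∀ k, k < n → ∀ t, deriv (u k) t
      = ∑ j ∈ Finset.range (k + 1), (q k).coeff j * iteratedDeriv (j + 1) R t :=
    fun k hk t => (huHasDeriv k hk t).deriv
  -- the chain identity
  have hchain : ∀ k, k < n → ∀ t, deriv (u k) t = lam k * u k t + u (k + 1) t := by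
    intro k hk t
    have hq1 : q (k + 1) = q k * Polynomial.X - Polynomial.C (lam k) * q k := by
      rw [hqsucc k hk]; ring
    have e1 : u (k + 1) t
        = (∑ j ∈ Finset.range (k + 2), (q k * Polynomial.X).coeff j * iteratedDeriv j R t)
          - lam k * (∑ j ∈ Finset.range (k + 2), (q k).coeff j * iteratedDeriv j R t) := by
      rw [hudef]
      simp only [hq1, Polynomial.coeff_sub, Polynomial.coeff_C_mul, sub_mul,
        Finset.sum_sub_distrib, Finset.mul_sum]
      ring_nf
    have e2 : (∑ j ∈ Finset.range (k + 2), (q k * Polynomial.X).coeff j * iteratedDeriv j R t)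
        = deriv (u k) t := by
      rw [Finset.sum_range_succ']
      rw [Polynomial.coeff_mul_X_zero, zero_mul, add_zero, huderiv k hk t]
      apply Finset.sum_congr rfl
      intro j _
      rw [Polynomial.coeff_mul_X]
    have e3 : (∑ j ∈ Finset.range (k + 2), (q k).coeff j * iteratedDeriv j R t) = u k t := by
      rw [Finset.sum_range_succ]
      rw [Polynomial.coeff_eq_zero_of_natDegree_lt (lt_of_le_of_lt (hqdeg k) (by omega)),
        zero_mul, add_zero, hudef]
    rw [e1, e2, e3]
    ring
  -- top of the chain equals f
  have htop : ∀ t : ℝ, 0 ≤ t → u n t = (f t : ℂ) := by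
    intro t ht
    have e1 : u n t = ∑ j ∈ Finset.range (n + 1), P.coeff j * iteratedDeriv j R t := by
      simp only [hudef]
      rw [hqn]
    rw [e1, Finset.sum_range_succ]
    have e2 : P.coeff n = 1 := by
      have := hmonic
      rw [Polynomial.Monic] at this
      rw [← hPdeg]
      exact this
    rw [e2, one_mul]
    have e3 : ∀ j, iteratedDeriv j R t = ((iteratedDeriv j r t : ℝ) : ℂ) := by
      intro j
      rw [hiter j]
    have e4 : ∑ j ∈ Finset.range n, P.coeff j * iteratedDeriv j R t
        = ((∑ j ∈ Finset.range n, a (j + 1) * iteratedDeriv j r t : ℝ) : ℂ) := by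
      push_cast
      apply Finset.sum_congr rfl
      intro j hj
      rw [hcoeff j (Finset.mem_range.mp hj), e3 j]
    rw [e4, e3 n]
    rw [← Complex.ofReal_add]
    rw [add_comm]
    exact_mod_cast congrArg (fun x : ℝ => (x : ℂ)) (hode t ht)
  -- limit values
  set M : ℕ → ℂ := fun k => (fstar : ℂ) / (((l.drop k).map (fun z => -z)).prod) with hMdef
  have hMn : M n = (fstar : ℂ) := by
    rw [hMdef]
    simp only
    rw [← hlen, List.drop_length]
    simp
  have hMrec : ∀ k, k < n → M k = -M (k + 1) / lam k := by
    intro k hk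
    have hk' : k < l.length := by omega
    have hdropeq : l.drop k = l[k] :: l.drop (k + 1) := List.drop_eq_getElem_cons hk'
    have hlamk : lam k = l[k] := by
      rw [hlamdef]
      simp [List.getD_eq_getElem l 0 hk', List.getElem?_eq_getElem hk']
    have hrest : ((l.drop (k + 1)).map (fun z => -z)).prod ≠ 0 := by
      apply List.prod_ne_zero
      intro h0
      rw [List.mem_map] at h0
      obtain ⟨z, hz, hz0⟩ := h0
      have hzmem : z ∈ P.roots := by
        rw [← Multiset.mem_toList]
        exact List.mem_of_mem_drop hz
      have := hrootsneg z hzmem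
      have hz' : z = 0 := by
        have : -z = 0 := hz0
        simpa [neg_eq_zero] using this
      rw [hz'] at this
      simp at this
    rw [hMdef]
    simp only
    rw [hdropeq]
    rw [List.map_cons, List.prod_cons, ← hlamk]
    have hlk := hlamne k hk
    field_simp
  -- backward induction: each chain function converges
  have hconv : ∀ d, d ≤ n → Tendsto (u (n - d)) atTop (nhds (M (n - d))) := by
    intro d
    induction d with
    | zero =>
        intro _
        rw [Nat.sub_zero, hMn]
        have h1 : Tendsto (fun t => ((f t : ℝ) : ℂ)) atTop (nhds ((fstar : ℝ) : ℂ)) :=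
          (Complex.continuous_ofReal.tendsto fstar).comp hflim
        apply h1.congr'
        filter_upwards [eventually_ge_atTop (0 : ℝ)] with t ht
        exact (htop t ht).symm
    | succ d ih =>
        intro hd
        have hd' : d ≤ n := by omega
        have ihh := ih hd'
        have hkn : n - (d + 1) < n := by omega
        have hksucc : n - d = (n - (d + 1)) + 1 := by omega
        rw [hksucc] at ihh
        have hres := first_order_limit (lam (n - (d + 1))) (hlamre _ hkn)
          (u (n - (d + 1))) (u ((n - (d + 1)) + 1)) (hudiff _ hkn)
          (fun t _ => hchain _ hkn t) (M ((n - (d + 1)) + 1)) ihh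
        rw [← hMrec _ hkn] at hres
        exact hres
  have hconv' : ∀ k, k ≤ n → Tendsto (u k) atTop (nhds (M k)) := by
    intro k hk
    have := hconv (n - k) (by omega)
    rwa [show n - (n - k) = k by omega] at this
  -- value of M 0
  have hM0 : M 0 = ((fstar / a 1 : ℝ) : ℂ) := by
    have ha1 : (a 1 : ℂ) = ((l.map (fun z => -z)).prod) := by
      have h1 : (a 1 : ℂ) = P.coeff 0 := (hcoeff 0 (by omega)).symm
      rw [h1, Polynomial.coeff_zero_eq_eval_zero, ← hlprod, Polynomial.eval_list_prod,
        List.map_map]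
      simp [Function.comp_def]
    rw [hMdef]
    simp only [List.drop_zero]
    rw [← ha1]
    push_cast
    rfl
  -- first conclusion
  have hgoal1 : Tendsto r atTop (nhds (fstar / a 1)) := by
    have h1 : Tendsto R atTop (nhds (M 0)) := by
      rw [← hu0]
      exact hconv' 0 (by omega)
    have h2 := (Complex.continuous_re.tendsto (M 0)).comp h1
    rw [hM0] at h2
    have h3 : Complex.re ∘ R = r := by
      funext t
      simp [hRdef]
    rw [h3] at h2
    simpa using h2
  -- derivatives of chain functions tend to zero
  have hderiv_u_zero : ∀ k, k < n → Tendsto (deriv (u k)) atTop (nhds 0) := by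
    intro k hk
    have hval : lam k * M k + M (k + 1) = 0 := by
      have hne := hlamne k hk
      rw [hMrec k hk]
      field_simp
      ring
    have hlim : Tendsto (fun t => lam k * u k t + u (k + 1) t) atTop
        (nhds (lam k * M k + M (k + 1))) :=
      (tendsto_const_nhds.mul (hconv' k hk.le)).add (hconv' (k + 1) hk)
    rw [hval] at hlim
    apply hlim.congr
    intro t
    exact (hchain k hk t).symm
  -- representation of iterated derivatives as combinations of chain functions
  have rep : ∀ i, i < n → ∃ c : ℕ → ℂ, ∀ t,
      iteratedDeriv i R t = ∑ j ∈ Finset.range (i + 1), c j * u j t := by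
    intro i
    induction i with
    | zero =>
        intro _
        refine ⟨fun _ => 1, fun t => ?_⟩
        simp [hu0, iteratedDeriv_zero]
    | succ i ih =>
        intro hi
        obtain ⟨c, hc⟩ := ih (by omega)
        refine ⟨fun j => (if j ≤ i then c j * lam j else 0)
          + (if j = 0 then 0 else c (j - 1)), fun t => ?_⟩
        have hstep1 : iteratedDeriv (i + 1) R t
            = ∑ j ∈ Finset.range (i + 1), c j * deriv (u j) t := by
          rw [iteratedDeriv_succ]
          have hfun : iteratedDeriv i R = fun s => ∑ j ∈ Finset.range (i + 1), c j * u j s :=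
            funext hc
          rw [hfun]
          have hD : HasDerivAt (fun s => ∑ j ∈ Finset.range (i + 1), c j * u j s)
              (∑ j ∈ Finset.range (i + 1), c j * deriv (u j) t) t := by
            apply HasDerivAt.fun_sum
            intro j hj
            have hjn : j < n := by
              have := Finset.mem_range.mp hj
              omega
            exact ((hudiff j hjn) t).hasDerivAt.const_mul _
          exact hD.deriv
        rw [hstep1]
        have hstep2 : ∑ j ∈ Finset.range (i + 1), c j * deriv (u j) t
            = ∑ j ∈ Finset.range (i + 1), (c j * lam j * u j t + c j * u (j + 1) t) := by
          apply Finset.sum_congr rfl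
          intro j hj
          have hjn : j < n := by
            have := Finset.mem_range.mp hj
            omega
          rw [hchain j hjn t]
          ring
        rw [hstep2, Finset.sum_add_distrib]
        rw [Finset.sum_range_succ]
        have hsplit1 : ∑ j ∈ Finset.range (i + 1 + 1),
            ((if j ≤ i then c j * lam j else 0) + (if j = 0 then 0 else c (j - 1))) * u j t
            = (∑ j ∈ Finset.range (i + 1 + 1), (if j ≤ i then c j * lam j else 0) * u j t)
              + ∑ j ∈ Finset.range (i + 1 + 1), (if j = 0 then 0 else c (j - 1)) * u j t := by
          rw [← Finset.sum_add_distrib]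
          apply Finset.sum_congr rfl
          intro j _
          ring
        rw [hsplit1]
        have hsum1 : ∑ j ∈ Finset.range (i + 1 + 1), (if j ≤ i then c j * lam j else 0) * u j t
            = ∑ j ∈ Finset.range (i + 1), c j * lam j * u j t := by
          rw [Finset.sum_range_succ, if_neg (by omega), zero_mul, add_zero]
          apply Finset.sum_congr rfl
          intro j hj
          rw [if_pos (by
            have := Finset.mem_range.mp hj
            omega)]
        have hsum2 : ∑ j ∈ Finset.range (i + 1 + 1), (if j = 0 then 0 else c (j - 1)) * u j t
            = ∑ j ∈ Finset.range (i + 1), c j * u (j + 1) t := by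
          rw [Finset.sum_range_succ']
          rw [if_pos rfl, zero_mul, add_zero]
          apply Finset.sum_congr rfl
          intro j _
          rw [if_neg (by omega)]
          simp
        rw [hsum1, hsum2]
        rw [Finset.sum_range_succ (fun j => c j * lam j * u j t) i]
  -- second conclusion
  refine ⟨hgoal1, ?_⟩
  intro i hi1 hi2
  have hi2' : i - 1 < n := by omega
  obtain ⟨c, hc⟩ := rep (i - 1) hi2'
  have hisucc : i = (i - 1) + 1 := by omega
  have hrepd : ∀ t, iteratedDeriv i R t
      = ∑ j ∈ Finset.range ((i - 1) + 1), c j * deriv (u j) t := by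
    intro t
    conv_lhs => rw [hisucc]
    rw [iteratedDeriv_succ]
    have hfun : iteratedDeriv (i - 1) R
        = fun s => ∑ j ∈ Finset.range ((i - 1) + 1), c j * u j s := funext hc
    rw [hfun]
    have hD : HasDerivAt (fun s => ∑ j ∈ Finset.range ((i - 1) + 1), c j * u j s)
        (∑ j ∈ Finset.range ((i - 1) + 1), c j * deriv (u j) t) t := by
      apply HasDerivAt.fun_sum
      intro j hj
      have hjn : j < n := by
        have := Finset.mem_range.mp hj
        omega
      exact ((hudiff j hjn) t).hasDerivAt.const_mul _
    exact hD.deriv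
  have hRlim : Tendsto (iteratedDeriv i R) atTop (nhds 0) := by
    have hsumlim : Tendsto (fun t => ∑ j ∈ Finset.range ((i - 1) + 1), c j * deriv (u j) t)
        atTop (nhds 0) := by
      have h0 : (0 : ℂ) = ∑ j ∈ Finset.range ((i - 1) + 1), c j * 0 := by simp
      rw [h0]
      apply tendsto_finset_sum
      intro j hj
      have hjn : j < n := by
        have := Finset.mem_range.mp hj
        omega
      exact tendsto_const_nhds.mul (hderiv_u_zero j hjn)
    exact hsumlim.congr (fun t => (hrepd t).symm)
  have h1 := (Complex.continuous_re.tendsto 0).comp hRlim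
  have h2 : Complex.re ∘ (iteratedDeriv i R) = iteratedDeriv i r := by
    funext t
    rw [hiter i]
    simp
  rw [h2] at h1
  simpa using h1
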